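/- arXiv:1810.08107 — 2 statements merged into one kernel-verified Lean document; each statement's English description precedes it below -/
import Mathlib

section
/- For any fixed integer a ≥ 1 and any integer s ≥ (16a)², we have ∑_{i=1}^{s} i^a · s_(i) / s^i ≤ 5 · (2a)^{a/2} · s^{(a+1)/2}, where s_(i) = s(s−1)⋯(s−i+1) denotes the falling factorial. -/
set_option maxHeartbeats 1000000

open Finset Real

lemma aux_pow_succ (x : ℝ) (hx : 0 ≤ x) : ∀ k : ℕ, x^(k+1) + (k+1)*x^k ≤ (x+1)^(k+1) := by
  intro k
  induction k with
  | zero => simp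
  | succ k ih =>
    have e1 : (x+1)^(k+1+1) = (x+1)^(k+1) * (x+1) := by ring
    have e2 : x^(k+1+1) = x^(k+1) * x := by ring
    have e3 : x^k * x = x^(k+1) := (pow_succ x k).symm
    have hp : 0 ≤ x^k := pow_nonneg hx k
    have hp1 : 0 ≤ x^(k+1) := pow_nonneg hx _
    have hk : (0:ℝ) ≤ (k:ℝ) + 1 := by positivity
    have hmul := mul_le_mul_of_nonneg_right ih (by linarith : (0:ℝ) ≤ x + 1)
    push_cast
    rw [e1, e2]
    nlinarith [hmul, mul_nonneg hk hp]

lemma aux_sum_pow (a : ℕ) (n : ℕ) : ∑ i ∈ Finset.range n, (i:ℝ)^a ≤ (n:ℝ)^(a+1)/(a+1) := by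
  induction n with
  | zero => simp
  | succ n ih =>
    rw [Finset.sum_range_succ]
    have h := aux_pow_succ (n:ℝ) (by positivity) a
    have ha1 : (0:ℝ) < (a:ℝ) + 1 := by positivity
    push_cast
    calc ∑ x ∈ range n, (x:ℝ)^a + (n:ℝ)^a
        ≤ (n:ℝ)^(a+1)/((a:ℝ)+1) + (n:ℝ)^a := by linarith
      _ = ((n:ℝ)^(a+1) + ((a:ℝ)+1)*(n:ℝ)^a)/((a:ℝ)+1) := by field_simp
      _ ≤ ((n:ℝ)+1)^(a+1)/((a:ℝ)+1) := by gcongr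

lemma aux_descFac (s i : ℕ) (hi : i ≤ s) (hs : 0 < s) :
    (s.descFactorial i : ℝ) ≤ (s:ℝ)^i * Real.exp (-((i:ℝ)*((i:ℝ)-1)) / (2*s)) := by
  have hS0 : (0:ℝ) < s := by exact_mod_cast hs
  have hcast : (s.descFactorial i : ℝ) = ∏ k ∈ Finset.range i, ((s:ℝ) - k) := by
    rw [Nat.descFactorial_eq_prod_range]
    push_cast [Nat.cast_sub]
    apply Finset.prod_congr rfl
    intro k hk
    rw [Nat.cast_sub (le_of_lt (lt_of_lt_of_le (Finset.mem_range.mp hk) hi))]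
  rw [hcast]
  have step : ∏ k ∈ Finset.range i, ((s:ℝ) - k) ≤ ∏ k ∈ Finset.range i, ((s:ℝ) * Real.exp (-(k:ℝ)/s)) := by
    apply Finset.prod_le_prod
    · intro k hk
      have : (k:ℝ) ≤ s := by
        exact_mod_cast le_of_lt (lt_of_lt_of_le (Finset.mem_range.mp hk) hi)
      linarith
    · intro k hk
      have h1 : -(k:ℝ)/s + 1 ≤ Real.exp (-(k:ℝ)/s) := Real.add_one_le_exp _
      have h2 := mul_le_mul_of_nonneg_left h1 hS0.le
      calc (s:ℝ) - k = s * (-(k:ℝ)/s + 1) := by field_simp; ring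
        _ ≤ s * Real.exp (-(k:ℝ)/s) := h2
  refine step.trans ?_
  have hsum : ∑ k ∈ Finset.range i, (-(k:ℝ)/s) = -((i:ℝ)*((i:ℝ)-1)) / (2*s) := by
    rw [← Finset.sum_div, Finset.sum_neg_distrib]
    rcases Nat.eq_zero_or_pos i with h0 | h1
    · subst h0; simp
    · have hg := Finset.sum_range_id_mul_two i
      have hg' : ((∑ k ∈ Finset.range i, k : ℕ) : ℝ) * 2 = (i:ℝ) * ((i:ℝ) - 1) := by
        have hc : ((i * (i-1) : ℕ) : ℝ) = (i:ℝ) * ((i:ℝ)-1) := by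
          push_cast [Nat.cast_sub h1]; ring
        rw [← hc, ← hg]; push_cast; ring
      push_cast at hg' ⊢
      rw [show (∑ k ∈ Finset.range i, (k:ℝ)) = (i:ℝ)*((i:ℝ)-1)/2 by linarith]
      ring
  rw [Finset.prod_mul_distrib, Finset.prod_const, Finset.card_range, ← Real.exp_sum, hsum]

lemma laplace_head (a s m : ℕ) (hs0 : 0 < s)
    (hA1 : (1:ℝ) ≤ (a:ℝ)) (hS0 : (0:ℝ) < (s:ℝ))
    (t : ℝ) (ht0 : 0 < t) (ht16a : 16*(a:ℝ) ≤ t) (ht16 : (16:ℝ) ≤ t)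
    (hMt1 : (m:ℝ) ≤ t + 1)
    (htAS : t ≤ ((a:ℝ)+1) * Real.sqrt (s:ℝ)) :
    ∑ i ∈ Finset.Icc 1 m, (i : ℝ) ^ a * (s.descFactorial i : ℝ) / (s:ℝ) ^ i
      ≤ 2 * t^a * Real.sqrt (s:ℝ) := by
  have hsq : (0:ℝ) ≤ Real.sqrt (s:ℝ) := Real.sqrt_nonneg _
  have hstep1 : ∀ i ∈ Finset.Icc 1 m, (i : ℝ) ^ a * (s.descFactorial i : ℝ) / (s:ℝ) ^ i ≤ (i:ℝ)^a := by
    intro i _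
    have hD : (s.descFactorial i : ℝ) ≤ (s:ℝ) ^ i := by
      have := Nat.descFactorial_le_pow s i
      exact_mod_cast this
    have hSi : (0:ℝ) < (s:ℝ) ^ i := by positivity
    rw [div_le_iff₀ hSi]
    have : (i:ℝ)^a * (s.descFactorial i : ℝ) ≤ (i:ℝ)^a * (s:ℝ)^i :=
      mul_le_mul_of_nonneg_left hD (by positivity)
    linarith
  have hstep2 : ∑ i ∈ Finset.Icc 1 m, (i:ℝ)^a ≤ ((m:ℝ)+1)^(a+1)/((a:ℝ)+1) := by
    calc ∑ i ∈ Finset.Icc 1 m, (i:ℝ)^a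
        ≤ ∑ i ∈ Finset.range (m+1), (i:ℝ)^a := by
          apply Finset.sum_le_sum_of_subset_of_nonneg
          · intro i hi
            simp only [Finset.mem_Icc] at hi
            simp only [Finset.mem_range]
            omega
          · intro i _ _; positivity
      _ ≤ ((m+1:ℕ):ℝ)^(a+1)/((a:ℝ)+1) := aux_sum_pow a (m+1)
      _ = ((m:ℝ)+1)^(a+1)/((a:ℝ)+1) := by push_cast; ring
  -- (M+1)^(a+1) ≤ (4/3) * t^(a+1)
  have hexp14 : Real.exp (1/4 : ℝ) ≤ 4/3 := by
    have huv : Real.exp (1/4:ℝ) * Real.exp (-(1/4:ℝ)) = 1 := by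
      rw [← Real.exp_add]; norm_num
    nlinarith [huv, Real.add_one_le_exp (-(1/4:ℝ)), Real.exp_pos (1/4:ℝ)]
  have hpow : ((m:ℝ)+1)^(a+1) ≤ (4/3) * t^(a+1) := by
    have h1 : (m:ℝ) + 1 ≤ t + 2 := by linarith
    have h2 : ((m:ℝ)+1)^(a+1) ≤ (t+2)^(a+1) := by
      apply pow_le_pow_left₀ (by positivity) h1
    have h3 : t + 2 = t * (1 + 2/t) := by field_simp
    have h4 : (1:ℝ) + 2/t ≤ Real.exp (2/t) := by
      have := Real.add_one_le_exp (2/t); linarith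
    have h5 : (t+2)^(a+1) ≤ t^(a+1) * Real.exp (2/t)^(a+1) := by
      rw [h3, mul_pow]
      exact mul_le_mul_of_nonneg_left (pow_le_pow_left₀ (by positivity) h4 _) (by positivity)
    have h6 : Real.exp (2/t)^(a+1) = Real.exp (((a:ℝ)+1) * (2/t)) := by
      rw [← Real.exp_nat_mul]; push_cast; ring_nf
    have h7 : ((a:ℝ)+1) * (2/t) ≤ 1/4 := by
      rw [mul_div_assoc'] at *
      rw [div_le_iff₀ ht0]
      nlinarith
    have h8 : Real.exp (((a:ℝ)+1) * (2/t)) ≤ 4/3 :=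
      le_trans (Real.exp_le_exp.mpr h7) hexp14
    calc ((m:ℝ)+1)^(a+1) ≤ (t+2)^(a+1) := h2
      _ ≤ t^(a+1) * Real.exp (2/t)^(a+1) := h5
      _ = t^(a+1) * Real.exp (((a:ℝ)+1) * (2/t)) := by rw [h6]
      _ ≤ t^(a+1) * (4/3) := by nlinarith [pow_nonneg ht0.le (a+1)]
      _ = (4/3) * t^(a+1) := by ring
  have hA1' : (0:ℝ) < (a:ℝ) + 1 := by linarith
  have hta : (0:ℝ) ≤ t^a := by positivity
  calc ∑ i ∈ Finset.Icc 1 m, (i : ℝ) ^ a * (s.descFactorial i : ℝ) / (s:ℝ) ^ i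
      ≤ ∑ i ∈ Finset.Icc 1 m, (i:ℝ)^a := Finset.sum_le_sum hstep1
    _ ≤ ((m:ℝ)+1)^(a+1)/((a:ℝ)+1) := hstep2
    _ ≤ ((4/3) * t^(a+1))/((a:ℝ)+1) := by gcongr
    _ = (4/3) * t^a * (t/((a:ℝ)+1)) := by rw [pow_succ]; ring
    _ ≤ (4/3) * t^a * Real.sqrt (s:ℝ) := by
        have ht' : t/((a:ℝ)+1) ≤ Real.sqrt (s:ℝ) := by
          rw [div_le_iff₀ hA1']
          calc t ≤ ((a:ℝ)+1) * Real.sqrt (s:ℝ) := htAS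
            _ = Real.sqrt (s:ℝ) * ((a:ℝ)+1) := by ring
        gcongr
    _ ≤ 2 * t^a * Real.sqrt (s:ℝ) := by nlinarith

lemma laplace_tail (a s m : ℕ) (hs0 : 0 < s)
    (hA1 : (1:ℝ) ≤ (a:ℝ)) (hS0 : (0:ℝ) < (s:ℝ))
    (t : ℝ) (ht0 : 0 < t) (ht16a : 16*(a:ℝ) ≤ t) (ht16 : (16:ℝ) ≤ t)
    (ht_sq : t^2 = 2*(a:ℝ)*(s:ℝ))
    (hM0 : (1:ℝ) ≤ (m:ℝ)) (hM1 : (m:ℝ) - 1 ≤ t)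
    (hMsq : 2*(a:ℝ)*(s:ℝ) + 1 ≤ (m:ℝ)^2)
    (htM : t ≤ (m:ℝ)) (hM15 : (15/16)*t ≤ (m:ℝ) - 1) :
    ∑ i ∈ Finset.Icc (m+1) s, (i : ℝ) ^ a * (s.descFactorial i : ℝ) / (s:ℝ) ^ i
      ≤ 3 * t^a * Real.sqrt (s:ℝ) := by
  have hM0' : (0:ℝ) < (m:ℝ) := by linarith
  set x : ℝ := ((m:ℝ) - 1)/(2*(s:ℝ)) with hxdef
  set q : ℝ := Real.exp (-x) with hqdef
  have hx0 : 0 < x := by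
    apply div_pos (by nlinarith) (by linarith)
  have hx1 : x ≤ 1 := by
    rw [hxdef, div_le_one (by linarith)]
    -- m - 1 ≤ t ≤ s ≤ 2s : t ≤ s since t² = 2as ≤ s²
    have htS : t ≤ (s:ℝ) := by nlinarith
    linarith
  have hq0 : 0 ≤ q := le_of_lt (Real.exp_pos _)
  have hq1 : q < 1 := by
    rw [hqdef, Real.exp_lt_one_iff]; linarith
  have h1q : x/2 ≤ 1 - q := by
    have hex : x + 1 ≤ Real.exp x := Real.add_one_le_exp x
    have key : q * Real.exp x = 1 := by rw [hqdef, ← Real.exp_add]; simp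
    nlinarith [Real.exp_pos x]
  -- per-term bound
  have hterm : ∀ i ∈ Finset.Icc (m+1) s,
      (i : ℝ) ^ a * (s.descFactorial i : ℝ) / (s:ℝ) ^ i ≤ (m:ℝ)^a * q^i := by
    intro i hi
    simp only [Finset.mem_Icc] at hi
    have hIm : (m:ℝ) + 1 ≤ (i:ℝ) := by exact_mod_cast hi.1
    have hIs : (i:ℝ) ≤ (s:ℝ) := by exact_mod_cast hi.2
    have hI0 : (0:ℝ) < (i:ℝ) := by linarith
    have hstepA : (i : ℝ) ^ a * (s.descFactorial i : ℝ) / (s:ℝ) ^ i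
        ≤ (i:ℝ)^a * Real.exp (-((i:ℝ)*((i:ℝ)-1)) / (2*(s:ℝ))) := by
      have hD := aux_descFac s i hi.2 hs0
      have hSi : (0:ℝ) < (s:ℝ)^i := by positivity
      rw [div_le_iff₀ hSi]
      calc (i : ℝ) ^ a * (s.descFactorial i : ℝ)
          ≤ (i:ℝ)^a * ((s:ℝ)^i * Real.exp (-((i:ℝ)*((i:ℝ)-1)) / (2*(s:ℝ)))) :=
            mul_le_mul_of_nonneg_left hD (by positivity)
        _ = (i:ℝ)^a * Real.exp (-((i:ℝ)*((i:ℝ)-1)) / (2*(s:ℝ))) * (s:ℝ)^i := by ring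
    have hstepB : (i:ℝ)^a ≤ (m:ℝ)^a * Real.exp ((a:ℝ) * (((i:ℝ)-(m:ℝ))/(m:ℝ))) := by
      have h1 : (i:ℝ) ≤ (m:ℝ) * Real.exp (((i:ℝ)-(m:ℝ))/(m:ℝ)) := by
        have he := Real.add_one_le_exp (((i:ℝ)-(m:ℝ))/(m:ℝ))
        have : (m:ℝ) * ((((i:ℝ)-(m:ℝ))/(m:ℝ)) + 1) = (i:ℝ) := by field_simp; ring
        nlinarith
      calc (i:ℝ)^a ≤ ((m:ℝ) * Real.exp (((i:ℝ)-(m:ℝ))/(m:ℝ)))^a :=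
            pow_le_pow_left₀ hI0.le h1 a
        _ = (m:ℝ)^a * Real.exp (((i:ℝ)-(m:ℝ))/(m:ℝ))^a := mul_pow _ _ _
        _ = (m:ℝ)^a * Real.exp ((a:ℝ) * (((i:ℝ)-(m:ℝ))/(m:ℝ))) := by
            rw [← Real.exp_nat_mul]
    -- exponent inequality
    have hE : (a:ℝ) * (((i:ℝ)-(m:ℝ))/(m:ℝ)) + (-((i:ℝ)*((i:ℝ)-1)) / (2*(s:ℝ)))
        ≤ (i:ℝ) * (-x) := by
      have hfact : (i:ℝ) * (-x) - ((a:ℝ) * (((i:ℝ)-(m:ℝ))/(m:ℝ)) + (-((i:ℝ)*((i:ℝ)-1)) / (2*(s:ℝ))))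
          = ((i:ℝ)-(m:ℝ)) * ((i:ℝ)*(m:ℝ) - 2*(a:ℝ)*(s:ℝ)) / (2*(s:ℝ)*(m:ℝ)) := by
        rw [hxdef]; field_simp; ring
      have hnum : 0 ≤ ((i:ℝ)-(m:ℝ)) * ((i:ℝ)*(m:ℝ) - 2*(a:ℝ)*(s:ℝ)) := by
        apply mul_nonneg (by linarith)
        nlinarith
      have := div_nonneg hnum (by positivity : (0:ℝ) ≤ 2*(s:ℝ)*(m:ℝ))
      linarith [hfact ▸ this]
    have hqi : q^i = Real.exp ((i:ℝ) * (-x)) := by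
      rw [hqdef, ← Real.exp_nat_mul]
    calc (i : ℝ) ^ a * (s.descFactorial i : ℝ) / (s:ℝ) ^ i
        ≤ (i:ℝ)^a * Real.exp (-((i:ℝ)*((i:ℝ)-1)) / (2*(s:ℝ))) := hstepA
      _ ≤ (m:ℝ)^a * Real.exp ((a:ℝ) * (((i:ℝ)-(m:ℝ))/(m:ℝ))) * Real.exp (-((i:ℝ)*((i:ℝ)-1)) / (2*(s:ℝ))) := by
          apply mul_le_mul_of_nonneg_right hstepB (le_of_lt (Real.exp_pos _))
      _ = (m:ℝ)^a * Real.exp ((a:ℝ) * (((i:ℝ)-(m:ℝ))/(m:ℝ)) + (-((i:ℝ)*((i:ℝ)-1)) / (2*(s:ℝ)))) := by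
          rw [Real.exp_add]; ring
      _ ≤ (m:ℝ)^a * Real.exp ((i:ℝ) * (-x)) := by
          apply mul_le_mul_of_nonneg_left (Real.exp_le_exp.mpr hE) (by positivity)
      _ = (m:ℝ)^a * q^i := by rw [hqi]
  -- geometric sum
  have hgeom : ∑ i ∈ Finset.Icc (m+1) s, q^i ≤ q^(m+1)/(1-q) := by
    rw [← Finset.Ico_add_one_right_eq_Icc]
    exact geom_sum_Ico_le_of_lt_one hq0 hq1
  have hsum1 : ∑ i ∈ Finset.Icc (m+1) s, (i : ℝ) ^ a * (s.descFactorial i : ℝ) / (s:ℝ) ^ i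
      ≤ (m:ℝ)^a * (q^(m+1)/(1-q)) := by
    calc ∑ i ∈ Finset.Icc (m+1) s, (i : ℝ) ^ a * (s.descFactorial i : ℝ) / (s:ℝ) ^ i
        ≤ ∑ i ∈ Finset.Icc (m+1) s, (m:ℝ)^a * q^i := Finset.sum_le_sum hterm
      _ = (m:ℝ)^a * ∑ i ∈ Finset.Icc (m+1) s, q^i := by rw [Finset.mul_sum]
      _ ≤ (m:ℝ)^a * (q^(m+1)/(1-q)) := by
          apply mul_le_mul_of_nonneg_left hgeom (by positivity)
  -- numeric bounds
  have hexp116 : Real.exp (1/16 : ℝ) ≤ 16/15 := by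
    have huv : Real.exp (1/16:ℝ) * Real.exp (-(1/16:ℝ)) = 1 := by
      rw [← Real.exp_add]; norm_num
    nlinarith [huv, Real.add_one_le_exp (-(1/16:ℝ)), Real.exp_pos (1/16:ℝ)]
  have hMa : (m:ℝ)^a ≤ (16/15) * t^a := by
    have h1 : (m:ℝ) ≤ t * Real.exp (1/t) := by
      have he := Real.add_one_le_exp (1/t)
      have : t * (1/t + 1) = t + 1 := by field_simp; ring
      nlinarith
    calc (m:ℝ)^a ≤ (t * Real.exp (1/t))^a := pow_le_pow_left₀ (by linarith) h1 a
      _ = t^a * Real.exp (1/t)^a := mul_pow _ _ _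
      _ = t^a * Real.exp ((a:ℝ) * (1/t)) := by rw [← Real.exp_nat_mul]
      _ ≤ t^a * Real.exp (1/16 : ℝ) := by
          apply mul_le_mul_of_nonneg_left _ (by positivity)
          apply Real.exp_le_exp.mpr
          rw [mul_one_div, div_le_div_iff₀ ht0 (by norm_num : (0:ℝ) < 16)]
          linarith
      _ ≤ t^a * (16/15) := by
          apply mul_le_mul_of_nonneg_left hexp116 (by positivity)
      _ = (16/15) * t^a := by ring
  have hqm : q^(m+1) ≤ 1/2 := by
    have h1 : q^(m+1) = Real.exp (((m:ℝ)+1) * (-x)) := by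
      rw [hqdef, ← Real.exp_nat_mul]; push_cast; ring_nf
    have h2 : ((m:ℝ)+1) * (-x) ≤ -(a:ℝ) := by
      rw [hxdef]
      rw [show ((m:ℝ)+1) * (-(((m:ℝ)-1)/(2*(s:ℝ)))) = -(((m:ℝ)^2-1)/(2*(s:ℝ))) by field_simp; ring]
      have : (a:ℝ) ≤ ((m:ℝ)^2-1)/(2*(s:ℝ)) := by
        rw [le_div_iff₀ (by linarith)]
        nlinarith
      linarith
    have h3 : Real.exp (-(a:ℝ)) ≤ 1/2 := by
      have he1 : (2:ℝ) ≤ Real.exp 1 := by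
        have := Real.add_one_le_exp (1:ℝ); linarith
      have he2 : Real.exp (-(a:ℝ)) ≤ Real.exp (-1) := Real.exp_le_exp.mpr (by linarith)
      have he3 : Real.exp (-1:ℝ) * Real.exp (1:ℝ) = 1 := by rw [← Real.exp_add]; norm_num
      nlinarith [Real.exp_pos (-1:ℝ)]
    rw [h1]
    exact le_trans (Real.exp_le_exp.mpr h2) h3
  have hinv : q^(m+1)/(1-q) ≤ 2*(s:ℝ)/((m:ℝ)-1) := by
    have hd : 0 < x/2 := by linarith
    have h1q' : 0 < 1 - q := by linarith
    calc q^(m+1)/(1-q) ≤ (1/2)/(x/2) := by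
          apply div_le_div₀ (by norm_num) hqm hd h1q
      _ = 1/x := by field_simp
      _ = 2*(s:ℝ)/((m:ℝ)-1) := by rw [hxdef]; field_simp
  -- S/t <= (3/4) sqrt S and final assembly
  have hsqS : Real.sqrt (s:ℝ) ^ 2 = (s:ℝ) := Real.sq_sqrt hS0.le
  have hsq0 : 0 < Real.sqrt (s:ℝ) := Real.sqrt_pos.mpr hS0
  have ht43 : (4/3)*Real.sqrt (s:ℝ) ≤ t := by
    nlinarith [hsqS, hsq0, ht0, hA1, hS0, ht_sq]
  have hst : (s:ℝ)/t ≤ (3/4) * Real.sqrt (s:ℝ) := by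
    rw [div_le_iff₀ ht0]
    nlinarith [ht43, hsq0, hsqS]
  have h2s : 2*(s:ℝ)/((m:ℝ)-1) ≤ (8/5) * Real.sqrt (s:ℝ) := by
    have hden : (0:ℝ) < (15/16)*t := by linarith
    calc 2*(s:ℝ)/((m:ℝ)-1) ≤ 2*(s:ℝ)/((15/16)*t) := by
          apply div_le_div_of_nonneg_left (by linarith) (by linarith) hM15
      _ = (32/15)*((s:ℝ)/t) := by field_simp; ring
      _ ≤ (32/15)*((3/4)*Real.sqrt (s:ℝ)) := by
          apply mul_le_mul_of_nonneg_left hst (by norm_num)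
      _ = (8/5) * Real.sqrt (s:ℝ) := by ring
  have hq_nonneg : 0 ≤ q^(m+1)/(1-q) := by
    apply div_nonneg (by positivity) (by linarith)
  calc ∑ i ∈ Finset.Icc (m+1) s, (i : ℝ) ^ a * (s.descFactorial i : ℝ) / (s:ℝ) ^ i
      ≤ (m:ℝ)^a * (q^(m+1)/(1-q)) := hsum1
    _ ≤ ((16/15) * t^a) * (q^(m+1)/(1-q)) := mul_le_mul_of_nonneg_right hMa hq_nonneg
    _ ≤ ((16/15) * t^a) * (2*(s:ℝ)/((m:ℝ)-1)) := mul_le_mul_of_nonneg_left hinv (by positivity)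
    _ ≤ ((16/15) * t^a) * ((8/5) * Real.sqrt (s:ℝ)) := mul_le_mul_of_nonneg_left h2s (by positivity)
    _ ≤ 3 * t^a * Real.sqrt (s:ℝ) := by nlinarith [mul_nonneg (pow_nonneg ht0.le a) hsq0.le]


/-- For fixed integer `a ≥ 1` and integer `s ≥ (16a)²`,
`∑_{i=1}^s i^a s_(i) / s^i ≤ 5 (2a)^{a/2} s^{(a+1)/2}`,
where `s_(i)` is the falling factorial. -/
theorem laplace_sum_bound (a s : ℕ) (ha : 1 ≤ a) (hs : (16 * a) ^ 2 ≤ s) :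
    ∑ i ∈ Finset.Icc 1 s, (i : ℝ) ^ a * (s.descFactorial i : ℝ) / (s : ℝ) ^ i
      ≤ 5 * (2 * (a : ℝ)) ^ ((a : ℝ) / 2) * (s : ℝ) ^ (((a : ℝ) + 1) / 2) := by
  have hA1 : (1:ℝ) ≤ (a:ℝ) := by exact_mod_cast ha
  have hA0 : (0:ℝ) < (a:ℝ) := by linarith
  have hS : 256 * (a:ℝ)^2 ≤ (s:ℝ) := by
    have h : ((16*a)^2 : ℝ) ≤ (s:ℝ) := by exact_mod_cast hs
    nlinarith [h]
  have hS0 : (0:ℝ) < (s:ℝ) := by nlinarith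
  have hs0 : 0 < s := by exact_mod_cast hS0
  obtain ⟨t, htdef⟩ : ∃ t : ℝ, t = Real.sqrt (2*(a:ℝ)*(s:ℝ)) := ⟨_, rfl⟩
  have ht_sq : t^2 = 2*(a:ℝ)*(s:ℝ) := by rw [htdef]; exact Real.sq_sqrt (by positivity)
  have ht0 : 0 < t := by rw [htdef]; exact Real.sqrt_pos.mpr (by positivity)
  have ht16a : 16*(a:ℝ) ≤ t := by
    rw [htdef, show 16*(a:ℝ) = Real.sqrt ((16*(a:ℝ))^2) by rw [Real.sqrt_sq (by positivity)]]
    apply Real.sqrt_le_sqrt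
    nlinarith
  have ht16 : (16:ℝ) ≤ t := by nlinarith
  have hsqS : Real.sqrt (s:ℝ) ^ 2 = (s:ℝ) := Real.sq_sqrt hS0.le
  have hsq0 : 0 < Real.sqrt (s:ℝ) := Real.sqrt_pos.mpr hS0
  obtain ⟨m, hmdef⟩ : ∃ m : ℕ, m = Nat.sqrt (2*a*s) + 1 := ⟨_, rfl⟩
  have hm'sq : (Nat.sqrt (2*a*s))^2 ≤ 2*a*s := Nat.sqrt_le' _
  have hmsq : 2*a*s < m^2 := by rw [hmdef]; exact Nat.lt_succ_sqrt' _
  have hms : m ≤ s := by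
    have h2as : 2*a*s < s^2 := by nlinarith [hs, ha, Nat.one_le_iff_ne_zero.mp ha]
    have := Nat.sqrt_lt'.mpr h2as
    omega
  have hM1 : (m:ℝ) - 1 ≤ t := by
    have h1 : ((Nat.sqrt (2*a*s) : ℕ):ℝ) ≤ t := by
      rw [htdef, show ((Nat.sqrt (2*a*s) : ℕ):ℝ) = Real.sqrt (((Nat.sqrt (2*a*s))^2 : ℕ) : ℝ) by
        push_cast; rw [Real.sqrt_sq (by positivity)]]
      apply Real.sqrt_le_sqrt
      push_cast
      exact_mod_cast hm'sq
    rw [hmdef]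
    push_cast
    linarith
  have hMsq : 2*(a:ℝ)*(s:ℝ) + 1 ≤ (m:ℝ)^2 := by
    have h : (2*a*s + 1 : ℕ) ≤ m^2 := hmsq
    exact_mod_cast h
  have hM0 : (1:ℝ) ≤ (m:ℝ) := by
    rw [hmdef]; push_cast; linarith [Nat.zero_le (Nat.sqrt (2*a*s))]
  have hM0' : (0:ℝ) < (m:ℝ) := by linarith
  have htM : t ≤ (m:ℝ) := by nlinarith
  have hM15 : (15/16)*t ≤ (m:ℝ) - 1 := by nlinarith
  have hMt1 : (m:ℝ) ≤ t + 1 := by linarith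
  have htAS : t ≤ ((a:ℝ)+1) * Real.sqrt (s:ℝ) := by
    rw [htdef]
    calc Real.sqrt (2*(a:ℝ)*(s:ℝ)) ≤ Real.sqrt (((a:ℝ)+1)^2*(s:ℝ)) := by
          apply Real.sqrt_le_sqrt; nlinarith
      _ = ((a:ℝ)+1) * Real.sqrt (s:ℝ) := by
          rw [Real.sqrt_mul (by positivity), Real.sqrt_sq (by positivity)]
  have hRHS : 5 * (2 * (a:ℝ)) ^ (((a:ℝ)) / 2) * (s:ℝ) ^ (((a:ℝ) + 1) / 2)
      = 5 * t^a * Real.sqrt (s:ℝ) := by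
    have h2A : (0:ℝ) ≤ 2*(a:ℝ) := by linarith
    have e1 : t = Real.sqrt (2*(a:ℝ)) * Real.sqrt (s:ℝ) := by
      rw [htdef]; exact Real.sqrt_mul h2A _
    have e2 : (2*(a:ℝ))^(((a:ℝ))/2) = (Real.sqrt (2*(a:ℝ)))^a := by
      rw [show ((a:ℝ))/2 = (1/2)*(a:ℝ) by ring]
      rw [Real.rpow_mul h2A, Real.rpow_natCast, ← Real.sqrt_eq_rpow]
    have e3 : (s:ℝ)^(((a:ℝ)+1)/2) = (Real.sqrt (s:ℝ))^a * Real.sqrt (s:ℝ) := by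
      rw [show ((a:ℝ)+1)/2 = (1/2)*(a:ℝ) + 1/2 by ring]
      rw [Real.rpow_add hS0, Real.rpow_mul hS0.le, Real.rpow_natCast, ← Real.sqrt_eq_rpow]
    rw [e1, e2, e3, mul_pow]
    ring
  rw [hRHS]
  have hsplit : ∑ i ∈ Finset.Icc 1 s, (i : ℝ) ^ a * (s.descFactorial i : ℝ) / (s:ℝ) ^ i
      = (∑ i ∈ Finset.Icc 1 m, (i : ℝ) ^ a * (s.descFactorial i : ℝ) / (s:ℝ) ^ i)
        + ∑ i ∈ Finset.Icc (m+1) s, (i : ℝ) ^ a * (s.descFactorial i : ℝ) / (s:ℝ) ^ i := by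
    rw [show Finset.Icc 1 s = Finset.Ioc 0 s by rw [← Finset.Icc_add_one_left_eq_Ioc]; rfl,
        show Finset.Icc 1 m = Finset.Ioc 0 m by rw [← Finset.Icc_add_one_left_eq_Ioc]; rfl,
        show Finset.Icc (m+1) s = Finset.Ioc m s by rw [← Finset.Icc_add_one_left_eq_Ioc]]
    exact (Finset.sum_Ioc_consecutive _ (Nat.zero_le m) hms).symm
  rw [hsplit]
  have hhead := laplace_head a s m hs0 hA1 hS0 t ht0 ht16a ht16 hMt1 htAS
  have htail := laplace_tail a s m hs0 hA1 hS0 t ht0 ht16a ht16 ht_sq hM0 hM1 hMsq htM hM15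
  linarith
end

section
/- Let c₀ ≥ 1 be an integer and for s ≥ 1 define F_s = ∑_{r=1}^{s} c₀^{s−r} s^{s−r−1} / ((r−1)!(s−r)!). Then c₀^{s−1} s^{s−1}/s! ≤ F_s ≤ c₀^{s−1} s^{s−1} e^{1/c₀} / s!. -/
lemma term_eq (c₀ s r : ℕ) (hs : 1 ≤ s) (hr : 1 ≤ r) (hrs : r ≤ s) :
    (c₀ : ℝ) ^ (s - r) * (s : ℝ) ^ ((s : ℤ) - (r : ℤ) - 1)
        / ((Nat.factorial (r - 1) : ℝ) * (Nat.factorial (s - r) : ℝ))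
      = (c₀ : ℝ) ^ (s - r) * (s : ℝ) ^ (s - 1)
        / ((s : ℝ) ^ r * (Nat.factorial (r - 1) : ℝ) * (Nat.factorial (s - r) : ℝ)) := by
  have hs0 : (0 : ℝ) < (s : ℝ) := by exact_mod_cast hs
  have h1 : ((s : ℤ) - (r : ℤ) - 1) = ((s - 1 : ℕ) : ℤ) - (r : ℤ) := by
    push_cast [Nat.cast_sub hs]; ring
  have h2 : (s : ℝ) ^ ((s : ℤ) - (r : ℤ) - 1) = (s : ℝ) ^ (s - 1) / (s : ℝ) ^ r := by
    rw [h1, zpow_sub₀ hs0.ne', zpow_natCast, zpow_natCast]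
  rw [h2]
  field_simp

/-- Let `c₀ ≥ 1` be an integer and for `s ≥ 1` define
`F_s = ∑_{r=1}^s c₀^(s-r) s^(s-r-1) / ((r-1)!(s-r)!)`. Then
`c₀^(s-1) s^(s-1)/s! ≤ F_s ≤ c₀^(s-1) s^(s-1) e^(1/c₀) / s!`. -/
theorem F_s_bounds (c₀ s : ℕ) (hc : 1 ≤ c₀) (hs : 1 ≤ s) :
    (c₀ : ℝ) ^ (s - 1) * (s : ℝ) ^ (s - 1) / (Nat.factorial s : ℝ)
        ≤ ∑ r ∈ Finset.Icc 1 s,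
            (c₀ : ℝ) ^ (s - r) * (s : ℝ) ^ ((s : ℤ) - (r : ℤ) - 1)
              / ((Nat.factorial (r - 1) : ℝ) * (Nat.factorial (s - r) : ℝ))
      ∧ ∑ r ∈ Finset.Icc 1 s,
            (c₀ : ℝ) ^ (s - r) * (s : ℝ) ^ ((s : ℤ) - (r : ℤ) - 1)
              / ((Nat.factorial (r - 1) : ℝ) * (Nat.factorial (s - r) : ℝ))
          ≤ (c₀ : ℝ) ^ (s - 1) * (s : ℝ) ^ (s - 1) * Real.exp (1 / (c₀ : ℝ))
              / (Nat.factorial s : ℝ) := by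
  have hs0 : (0 : ℝ) < (s : ℝ) := by exact_mod_cast hs
  have hc0 : (0 : ℝ) < (c₀ : ℝ) := by exact_mod_cast hc
  have hrw : ∀ r ∈ Finset.Icc 1 s,
      (c₀ : ℝ) ^ (s - r) * (s : ℝ) ^ ((s : ℤ) - (r : ℤ) - 1)
        / ((Nat.factorial (r - 1) : ℝ) * (Nat.factorial (s - r) : ℝ))
      = (c₀ : ℝ) ^ (s - r) * (s : ℝ) ^ (s - 1)
        / ((s : ℝ) ^ r * (Nat.factorial (r - 1) : ℝ) * (Nat.factorial (s - r) : ℝ)) := by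
    intro r hr
    rw [Finset.mem_Icc] at hr
    exact term_eq c₀ s r hs hr.1 hr.2
  rw [Finset.sum_congr rfl hrw]
  constructor
  · -- lower bound: the r = 1 term already equals the LHS
    have h1 : (1 : ℕ) ∈ Finset.Icc 1 s := by simp [hs]
    have hterm : (c₀ : ℝ) ^ (s - 1) * (s : ℝ) ^ (s - 1) / (Nat.factorial s : ℝ)
        = (c₀ : ℝ) ^ (s - 1) * (s : ℝ) ^ (s - 1)
          / ((s : ℝ) ^ 1 * (Nat.factorial (1 - 1) : ℝ) * (Nat.factorial (s - 1) : ℝ)) := by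
      have : (Nat.factorial s : ℝ) = (s : ℝ) * (Nat.factorial (s - 1) : ℝ) := by
        exact_mod_cast (Nat.mul_factorial_pred (by omega : s ≠ 0)).symm
      rw [this]
      norm_num
    rw [hterm]
    refine Finset.single_le_sum (f := fun r => (c₀ : ℝ) ^ (s - r) * (s : ℝ) ^ (s - 1)
        / ((s : ℝ) ^ r * (Nat.factorial (r - 1) : ℝ) * (Nat.factorial (s - r) : ℝ))) ?_ h1
    intro i _
    positivity
  · -- upper bound
    have hterm : ∀ r ∈ Finset.Icc 1 s,
        (c₀ : ℝ) ^ (s - r) * (s : ℝ) ^ (s - 1)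
          / ((s : ℝ) ^ r * (Nat.factorial (r - 1) : ℝ) * (Nat.factorial (s - r) : ℝ))
        ≤ (c₀ : ℝ) ^ (s - 1) * (s : ℝ) ^ (s - 1) / (Nat.factorial s : ℝ)
            * ((1 / (c₀ : ℝ)) ^ (r - 1) / (Nat.factorial (r - 1) : ℝ)) := by
      intro r hr
      rw [Finset.mem_Icc] at hr
      have hfac : (Nat.factorial s : ℝ) ≤ (s : ℝ) ^ r * (Nat.factorial (s - r) : ℝ) := by
        have := Nat.factorial_mul_descFactorial hr.2
        have hle : Nat.factorial s ≤ (s - r).factorial * s ^ r :=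
          this ▸ Nat.mul_le_mul_left _ (Nat.descFactorial_le_pow s r)
        calc (Nat.factorial s : ℝ) ≤ ((s - r).factorial * s ^ r : ℕ) := by exact_mod_cast hle
          _ = (s : ℝ) ^ r * (Nat.factorial (s - r) : ℝ) := by push_cast; ring
      have hcpow : (c₀ : ℝ) ^ (s - 1) = (c₀ : ℝ) ^ (s - r) * (c₀ : ℝ) ^ (r - 1) := by
        rw [← pow_add]
        congr 1
        omega
      have hR : (c₀ : ℝ) ^ (s - 1) * (s : ℝ) ^ (s - 1) / (Nat.factorial s : ℝ)
            * ((1 / (c₀ : ℝ)) ^ (r - 1) / (Nat.factorial (r - 1) : ℝ))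
          = (c₀ : ℝ) ^ (s - r) * (s : ℝ) ^ (s - 1)
            / ((Nat.factorial s : ℝ) * (Nat.factorial (r - 1) : ℝ)) := by
        rw [hcpow]
        field_simp
        ring_nf
        rw [← mul_pow, mul_inv_cancel₀ hc0.ne', one_pow]
      rw [hR]
      apply div_le_div_of_nonneg_left (by positivity) (by positivity)
      calc (Nat.factorial s : ℝ) * (Nat.factorial (r - 1) : ℝ)
          ≤ ((s : ℝ) ^ r * (Nat.factorial (s - r) : ℝ)) * (Nat.factorial (r - 1) : ℝ) :=
            mul_le_mul_of_nonneg_right hfac (by positivity)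
        _ = (s : ℝ) ^ r * (Nat.factorial (r - 1) : ℝ) * (Nat.factorial (s - r) : ℝ) := by ring
    calc ∑ r ∈ Finset.Icc 1 s, (c₀ : ℝ) ^ (s - r) * (s : ℝ) ^ (s - 1)
          / ((s : ℝ) ^ r * (Nat.factorial (r - 1) : ℝ) * (Nat.factorial (s - r) : ℝ))
        ≤ ∑ r ∈ Finset.Icc 1 s, (c₀ : ℝ) ^ (s - 1) * (s : ℝ) ^ (s - 1) / (Nat.factorial s : ℝ)
            * ((1 / (c₀ : ℝ)) ^ (r - 1) / (Nat.factorial (r - 1) : ℝ)) :=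
          Finset.sum_le_sum hterm
      _ = (c₀ : ℝ) ^ (s - 1) * (s : ℝ) ^ (s - 1) / (Nat.factorial s : ℝ)
            * ∑ k ∈ Finset.range s, (1 / (c₀ : ℝ)) ^ k / (Nat.factorial k : ℝ) := by
          rw [← Finset.mul_sum]
          congr 1
          rw [← Finset.Ico_add_one_right_eq_Icc, Finset.sum_Ico_eq_sum_range]
          simp
      _ ≤ (c₀ : ℝ) ^ (s - 1) * (s : ℝ) ^ (s - 1) / (Nat.factorial s : ℝ)
            * Real.exp (1 / (c₀ : ℝ)) := by
          apply mul_le_mul_of_nonneg_left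
            (Real.sum_le_exp_of_nonneg (by positivity) s) (by positivity)
      _ = (c₀ : ℝ) ^ (s - 1) * (s : ℝ) ^ (s - 1) * Real.exp (1 / (c₀ : ℝ))
            / (Nat.factorial s : ℝ) := by ring
end
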